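/- Let F_1, F_2 be binary frequency squares of order n ≡ 0 (mod 4). Let r, r' be two distinct rows of F_1⊕F_2, and suppose there exist two distinct columns c, c' such that F_1[r,c]=F_1[r',c], F_2[r,c]=F_2[r',c], F_1[r,c']=F_1[r',c'], and F_2[r,c']=F_2[r',c']. Then the pair {r,r'} is balanceable: there exists a 2×n binary matrix F with n/2 zeros and n/2 ones in each row and one 0 and one 1 in each column, orthogonal to both F_1(r,r') and F_2(r,r'). -/

import Mathlib

open Finset

def sgn (x y : Fin 2) : Fin 3 := if x = y then 0 else if x = 0 then 1 else 2

set_option maxHeartbeats 1000000 in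
theorem selA (K T Q a n : ℕ)
    (htot : 2*K + 3*T + 4*Q + a = n) (h4 : 4 ∣ n) (ha : 2 ≤ a) :
    ∃ p τ κ a₀, p ≤ K ∧ τ ≤ T ∧ κ ≤ Q ∧ a₀ ≤ a ∧
      2*p + 3*τ + 4*κ + a₀ = n/2 := by
  set t := n/2 with ht
  set κ := min Q (t/4) with hκ
  set τ := min T ((t - 4*κ)/3) with hτ
  set p := min K ((t - 4*κ - 3*τ)/2) with hp
  exact ⟨p, τ, κ, t - (2*p + 3*τ + 4*κ), by omega⟩

theorem selB (k₁ k₂ k₃ k₄ p : ℕ) (h : p ≤ k₁+k₂+k₃+k₄) :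
    ∃ p₁ p₂ p₃ p₄, p₁ ≤ k₁ ∧ p₂ ≤ k₂ ∧ p₃ ≤ k₃ ∧ p₄ ≤ k₄ ∧ p₁+p₂+p₃+p₄ = p :=
  ⟨min k₁ p, min k₂ (p - min k₁ p), min k₃ (p - min k₁ p - min k₂ (p - min k₁ p)),
   p - min k₁ p - min k₂ (p - min k₁ p) - min k₃ (p - min k₁ p - min k₂ (p - min k₁ p)),
   by omega⟩

theorem feas (bp bm cp cm e11 e12 e21 e22 a n : ℕ)
    (hrow : bp + e11 + e12 = bm + e21 + e22)
    (hcol : cp + e11 + e21 = cm + e12 + e22)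
    (htot : bp + bm + cp + cm + e11 + e12 + e21 + e22 + a = n)
    (h4 : 4 ∣ n) (ha : 2 ≤ a) :
    ∃ xbp xbm xcp xcm x11 x12 x21 x22 xa,
      xbp ≤ bp ∧ xbm ≤ bm ∧ xcp ≤ cp ∧ xcm ≤ cm ∧ x11 ≤ e11 ∧ x12 ≤ e12 ∧
      x21 ≤ e21 ∧ x22 ≤ e22 ∧ xa ≤ a ∧
      xbp + x11 + x12 = xbm + x21 + x22 ∧
      xcp + x11 + x21 = xcm + x12 + x22 ∧
      xbp + xbm + xcp + xcm + x11 + x12 + x21 + x22 + xa = n / 2 := by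
  obtain ⟨k, rfl⟩ := h4
  have hhalf : 4 * k / 2 = 2 * k := by omega
  rw [hhalf]
  rcases le_total e22 e11 with hA | hA <;> rcases le_total e21 e12 with hB | hB
  · obtain ⟨d1, hd1⟩ : ∃ d, e11 = e22 + d := ⟨e11 - e22, by omega⟩
    obtain ⟨d2, hd2⟩ : ∃ d, e12 = e21 + d := ⟨e12 - e21, by omega⟩
    subst hd1; subst hd2
    rcases le_total d2 d1 with hC | hC
    · obtain ⟨t, rfl⟩ : ∃ t, d1 = d2 + t := ⟨d1 - d2, by omega⟩
      obtain ⟨p, τ, κ, a₀, hp, hτ, hκ, ha₀, hs⟩ :=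
        selA (bp + cp + e22 + e21) t d2 a (4*k) (by omega) ⟨k, rfl⟩ ha
      obtain ⟨p₁, p₂, p₃, p₄, h1, h2, h3, h4', h5⟩ := selB bp cp e22 e21 p hp
      exact ⟨p₁, p₁ + τ + 2*κ, p₂, p₂ + τ, p₃ + τ + κ, p₄ + κ, p₄, p₃, a₀, by omega, by omega, by omega, by omega, by omega, by omega, by omega, by omega, by omega, by omega, by omega, by omega⟩
    · obtain ⟨t, rfl⟩ : ∃ t, d2 = d1 + t := ⟨d2 - d1, by omega⟩
      obtain ⟨p, τ, κ, a₀, hp, hτ, hκ, ha₀, hs⟩ :=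
        selA (bp + cm + e22 + e21) t d1 a (4*k) (by omega) ⟨k, rfl⟩ ha
      obtain ⟨p₁, p₂, p₃, p₄, h1, h2, h3, h4', h5⟩ := selB bp cm e22 e21 p hp
      exact ⟨p₁, p₁ + τ + 2*κ, p₂ + τ, p₂, p₃ + κ, p₄ + τ + κ, p₄, p₃, a₀, by omega, by omega, by omega, by omega, by omega, by omega, by omega, by omega, by omega, by omega, by omega, by omega⟩
  · obtain ⟨d1, hd1⟩ : ∃ d, e11 = e22 + d := ⟨e11 - e22, by omega⟩
    obtain ⟨d2, hd2⟩ : ∃ d, e21 = e12 + d := ⟨e21 - e12, by omega⟩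
    subst hd1; subst hd2
    rcases le_total d2 d1 with hC | hC
    · obtain ⟨t, rfl⟩ : ∃ t, d1 = d2 + t := ⟨d1 - d2, by omega⟩
      obtain ⟨p, τ, κ, a₀, hp, hτ, hκ, ha₀, hs⟩ :=
        selA (bp + cp + e22 + e12) t d2 a (4*k) (by omega) ⟨k, rfl⟩ ha
      obtain ⟨p₁, p₂, p₃, p₄, h1, h2, h3, h4', h5⟩ := selB bp cp e22 e12 p hp
      exact ⟨p₁, p₁ + τ, p₂, p₂ + τ + 2*κ, p₃ + τ + κ, p₄, p₄ + κ, p₃, a₀, by omega, by omega, by omega, by omega, by omega, by omega, by omega, by omega, by omega, by omega, by omega, by omega⟩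
    · obtain ⟨t, rfl⟩ : ∃ t, d2 = d1 + t := ⟨d2 - d1, by omega⟩
      obtain ⟨p, τ, κ, a₀, hp, hτ, hκ, ha₀, hs⟩ :=
        selA (bm + cp + e22 + e12) t d1 a (4*k) (by omega) ⟨k, rfl⟩ ha
      obtain ⟨p₁, p₂, p₃, p₄, h1, h2, h3, h4', h5⟩ := selB bm cp e22 e12 p hp
      exact ⟨p₁ + τ, p₁, p₂, p₂ + τ + 2*κ, p₃ + κ, p₄, p₄ + τ + κ, p₃, a₀, by omega, by omega, by omega, by omega, by omega, by omega, by omega, by omega, by omega, by omega, by omega, by omega⟩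
  · obtain ⟨d1, hd1⟩ : ∃ d, e22 = e11 + d := ⟨e22 - e11, by omega⟩
    obtain ⟨d2, hd2⟩ : ∃ d, e12 = e21 + d := ⟨e12 - e21, by omega⟩
    subst hd1; subst hd2
    rcases le_total d2 d1 with hC | hC
    · obtain ⟨t, rfl⟩ : ∃ t, d1 = d2 + t := ⟨d1 - d2, by omega⟩
      obtain ⟨p, τ, κ, a₀, hp, hτ, hκ, ha₀, hs⟩ :=
        selA (bm + cm + e11 + e21) t d2 a (4*k) (by omega) ⟨k, rfl⟩ ha
      obtain ⟨p₁, p₂, p₃, p₄, h1, h2, h3, h4', h5⟩ := selB bm cm e11 e21 p hp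
      exact ⟨p₁ + τ, p₁, p₂ + τ + 2*κ, p₂, p₃, p₄ + κ, p₄, p₃ + τ + κ, a₀, by omega, by omega, by omega, by omega, by omega, by omega, by omega, by omega, by omega, by omega, by omega, by omega⟩
    · obtain ⟨t, rfl⟩ : ∃ t, d2 = d1 + t := ⟨d2 - d1, by omega⟩
      obtain ⟨p, τ, κ, a₀, hp, hτ, hκ, ha₀, hs⟩ :=
        selA (bp + cm + e11 + e21) t d1 a (4*k) (by omega) ⟨k, rfl⟩ ha
      obtain ⟨p₁, p₂, p₃, p₄, h1, h2, h3, h4', h5⟩ := selB bp cm e11 e21 p hp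
      exact ⟨p₁, p₁ + τ, p₂ + τ + 2*κ, p₂, p₃, p₄ + τ + κ, p₄, p₃ + κ, a₀, by omega, by omega, by omega, by omega, by omega, by omega, by omega, by omega, by omega, by omega, by omega, by omega⟩
  · obtain ⟨d1, hd1⟩ : ∃ d, e22 = e11 + d := ⟨e22 - e11, by omega⟩
    obtain ⟨d2, hd2⟩ : ∃ d, e21 = e12 + d := ⟨e21 - e12, by omega⟩
    subst hd1; subst hd2
    rcases le_total d2 d1 with hC | hC
    · obtain ⟨t, rfl⟩ : ∃ t, d1 = d2 + t := ⟨d1 - d2, by omega⟩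
      obtain ⟨p, τ, κ, a₀, hp, hτ, hκ, ha₀, hs⟩ :=
        selA (bm + cm + e11 + e12) t d2 a (4*k) (by omega) ⟨k, rfl⟩ ha
      obtain ⟨p₁, p₂, p₃, p₄, h1, h2, h3, h4', h5⟩ := selB bm cm e11 e12 p hp
      exact ⟨p₁ + τ + 2*κ, p₁, p₂ + τ, p₂, p₃, p₄, p₄ + κ, p₃ + τ + κ, a₀, by omega, by omega, by omega, by omega, by omega, by omega, by omega, by omega, by omega, by omega, by omega, by omega⟩
    · obtain ⟨t, rfl⟩ : ∃ t, d2 = d1 + t := ⟨d2 - d1, by omega⟩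
      obtain ⟨p, τ, κ, a₀, hp, hτ, hκ, ha₀, hs⟩ :=
        selA (bm + cp + e11 + e12) t d1 a (4*k) (by omega) ⟨k, rfl⟩ ha
      obtain ⟨p₁, p₂, p₃, p₄, h1, h2, h3, h4', h5⟩ := selB bm cp e11 e12 p hp
      exact ⟨p₁ + τ + 2*κ, p₁, p₂, p₂ + τ, p₃, p₄, p₄ + τ + κ, p₃ + κ, a₀, by omega, by omega, by omega, by omega, by omega, by omega, by omega, by omega, by omega, by omega, by omega, by omega⟩

section aux
variable {α : Type*} [Fintype α] [DecidableEq α]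

lemma split_row' (f g : α → Fin 3) (C : α → Prop) [DecidablePred C] (i : Fin 3) :
    (univ.filter fun d => f d = i ∧ C d).card
      = (univ.filter fun d => f d = i ∧ g d = 0 ∧ C d).card
      + (univ.filter fun d => f d = i ∧ g d = 1 ∧ C d).card
      + (univ.filter fun d => f d = i ∧ g d = 2 ∧ C d).card := by
  simp only [Finset.card_filter, ← Finset.sum_add_distrib]
  refine Finset.sum_congr rfl fun d _ => ?_
  by_cases hC : C d <;> simp only [hC, and_true, and_false] <;>
    [skip; simp]
  generalize f d = x; generalize g d = y
  revert x y i; decide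

lemma split_col' (f g : α → Fin 3) (C : α → Prop) [DecidablePred C] (j : Fin 3) :
    (univ.filter fun d => g d = j ∧ C d).card
      = (univ.filter fun d => f d = 0 ∧ g d = j ∧ C d).card
      + (univ.filter fun d => f d = 1 ∧ g d = j ∧ C d).card
      + (univ.filter fun d => f d = 2 ∧ g d = j ∧ C d).card := by
  simp only [Finset.card_filter, ← Finset.sum_add_distrib]
  refine Finset.sum_congr rfl fun d _ => ?_
  by_cases hC : C d <;> simp only [hC, and_true, and_false] <;>
    [skip; simp]
  generalize f d = x; generalize g d = y
  revert x y j; decide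

lemma split_nine' (f g : α → Fin 3) (C : α → Prop) [DecidablePred C] :
    (univ.filter fun d => C d).card
      = (univ.filter fun d => f d = 0 ∧ g d = 0 ∧ C d).card
      + (univ.filter fun d => f d = 0 ∧ g d = 1 ∧ C d).card
      + (univ.filter fun d => f d = 0 ∧ g d = 2 ∧ C d).card
      + (univ.filter fun d => f d = 1 ∧ g d = 0 ∧ C d).card
      + (univ.filter fun d => f d = 1 ∧ g d = 1 ∧ C d).card
      + (univ.filter fun d => f d = 1 ∧ g d = 2 ∧ C d).card
      + (univ.filter fun d => f d = 2 ∧ g d = 0 ∧ C d).card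
      + (univ.filter fun d => f d = 2 ∧ g d = 1 ∧ C d).card
      + (univ.filter fun d => f d = 2 ∧ g d = 2 ∧ C d).card := by
  simp only [Finset.card_filter, ← Finset.sum_add_distrib]
  refine Finset.sum_congr rfl fun d _ => ?_
  by_cases hC : C d <;> simp only [hC, and_true, and_false] <;>
    [skip; simp]
  generalize f d = x; generalize g d = y
  revert x y; decide

lemma sgn_split_u' (u v : α → Fin 2) (C : α → Prop) [DecidablePred C] :
    (univ.filter fun d => u d = 0 ∧ C d).card
      = (univ.filter fun d => sgn (u d) (v d) = 1 ∧ C d).card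
      + (univ.filter fun d => u d = 0 ∧ v d = 0 ∧ C d).card := by
  simp only [Finset.card_filter, ← Finset.sum_add_distrib]
  refine Finset.sum_congr rfl fun d _ => ?_
  by_cases hC : C d <;> simp only [hC, and_true, and_false] <;>
    [skip; simp]
  generalize u d = x; generalize v d = y
  revert x y; decide

lemma sgn_split_v' (u v : α → Fin 2) (C : α → Prop) [DecidablePred C] :
    (univ.filter fun d => v d = 0 ∧ C d).card
      = (univ.filter fun d => sgn (u d) (v d) = 2 ∧ C d).card
      + (univ.filter fun d => u d = 0 ∧ v d = 0 ∧ C d).card := by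
  simp only [Finset.card_filter, ← Finset.sum_add_distrib]
  refine Finset.sum_congr rfl fun d _ => ?_
  by_cases hC : C d <;> simp only [hC, and_true, and_false] <;>
    [skip; simp]
  generalize u d = x; generalize v d = y
  revert x y; decide

end aux

lemma prod_split' {n : ℕ} (u v : Fin n → Fin 2) (H : Fin 2 → Fin n → Fin 2) (a b : Fin 2) :
    (univ.filter fun x : Fin 2 × Fin n =>
        (if x.1 = 0 then u x.2 else v x.2) = a ∧ H x.1 x.2 = b).card
      = (univ.filter fun d => u d = a ∧ H 0 d = b).card
      + (univ.filter fun d => v d = a ∧ H 1 d = b).card := by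
  simp only [Finset.card_filter]
  rw [Fintype.sum_prod_type, Fin.sum_univ_two]
  simp

lemma card_filter_split {α : Type*} [Fintype α] (P Q : α → Prop)
    [DecidablePred P] [DecidablePred Q] :
    (Finset.univ.filter fun d => P d ∧ Q d).card + (Finset.univ.filter fun d => P d ∧ ¬ Q d).card
      = (Finset.univ.filter P).card := by
  rw [Finset.card_filter, Finset.card_filter, Finset.card_filter, ← Finset.sum_add_distrib]
  refine Finset.sum_congr rfl fun d _ => ?_
  by_cases hP : P d <;> by_cases hQ : Q d <;> simp [hP, hQ]

lemma card_filter_split' {α : Type*} [Fintype α] (P Q : α → Prop)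
    [DecidablePred P] [DecidablePred Q] :
    (Finset.univ.filter fun d => P d ∧ Q d).card + (Finset.univ.filter fun d => ¬ P d ∧ Q d).card
      = (Finset.univ.filter Q).card := by
  rw [Finset.card_filter, Finset.card_filter, Finset.card_filter, ← Finset.sum_add_distrib]
  refine Finset.sum_congr rfl fun d _ => ?_
  by_cases hP : P d <;> by_cases hQ : Q d <;> simp [hP, hQ]

lemma orth_aux {n m : ℕ} (u v : Fin n → Fin 2) (S : Finset (Fin n))
    (hu0 : (Finset.univ.filter fun d => u d = 0).card = m)
    (hu1 : (Finset.univ.filter fun d => u d = 1).card = m)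
    (hv0 : (Finset.univ.filter fun d => v d = 0).card = m)
    (hv1 : (Finset.univ.filter fun d => v d = 1).card = m)
    (hS : S.card = m)
    (hbal : (Finset.univ.filter fun d => u d = 0 ∧ d ∈ S).card
          = (Finset.univ.filter fun d => v d = 0 ∧ d ∈ S).card) :
    ∀ a : Fin 2,
      ((Finset.univ.filter fun d => u d = a ∧ d ∈ S).card
        + (Finset.univ.filter fun d => v d = a ∧ d ∉ S).card = m) ∧
      ((Finset.univ.filter fun d => u d = a ∧ d ∉ S).card
        + (Finset.univ.filter fun d => v d = a ∧ d ∈ S).card = m) := by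
  have hfS : (Finset.univ.filter fun d => d ∈ S).card = m := by
    rw [Finset.filter_mem_eq_inter, Finset.univ_inter]; exact hS
  have hnot : ∀ x : Fin 2, (¬ x = 0) ↔ x = 1 := by decide
  have su0 := card_filter_split (fun d => u d = 0) (fun d => d ∈ S)
  have su1 := card_filter_split (fun d => u d = 1) (fun d => d ∈ S)
  have sv0 := card_filter_split (fun d => v d = 0) (fun d => d ∈ S)
  have sv1 := card_filter_split (fun d => v d = 1) (fun d => d ∈ S)
  rw [hu0] at su0; rw [hu1] at su1; rw [hv0] at sv0; rw [hv1] at sv1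
  have sSu := card_filter_split' (fun d => u d = 0) (fun d => d ∈ S)
  have sSv := card_filter_split' (fun d => v d = 0) (fun d => d ∈ S)
  simp only [hnot, hfS] at sSu sSv
  rw [Fin.forall_fin_two]
  refine ⟨⟨?_, ?_⟩, ?_, ?_⟩ <;> omega

lemma sgn_zero : ∀ x y : Fin 2, x = y → sgn x y = 0 := by decide


/-- A binary frequency square of order `n`: each symbol occurs `m` times in every
row and column. -/
def IsBinFS {n : ℕ} (m : ℕ) (F : Fin n → Fin n → Fin 2) : Prop :=
  (∀ i : Fin n, ∀ s : Fin 2, (Finset.univ.filter fun j => F i j = s).card = m) ∧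
  (∀ j : Fin n, ∀ s : Fin 2, (Finset.univ.filter fun i => F i j = s).card = m)

/-- Two `2 × n` binary arrays are orthogonal: each ordered pair occurs `n/2` times. -/
def OrthRows (n : ℕ) (G H : Fin 2 → Fin n → Fin 2) : Prop :=
  ∀ a b : Fin 2,
    (Finset.univ.filter fun x : Fin 2 × Fin n => G x.1 x.2 = a ∧ H x.1 x.2 = b).card = n / 2

theorem stmt14 (n : ℕ) (hn : 4 ∣ n)
    (F₁ F₂ : Fin n → Fin n → Fin 2) (h₁ : IsBinFS (n / 2) F₁) (h₂ : IsBinFS (n / 2) F₂)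
    (r r' : Fin n) (hrr : r ≠ r') (c c' : Fin n) (hcc : c ≠ c')
    (e₁ : F₁ r c = F₁ r' c) (e₂ : F₂ r c = F₂ r' c)
    (e₃ : F₁ r c' = F₁ r' c') (e₄ : F₂ r c' = F₂ r' c') :
    ∃ F : Fin 2 → Fin n → Fin 2,
      (∀ i : Fin 2, ∀ s : Fin 2, (Finset.univ.filter fun d => F i d = s).card = n / 2) ∧
      (∀ d, F 0 d ≠ F 1 d) ∧
      OrthRows n (fun i d => if i = 0 then F₁ r d else F₁ r' d) F ∧
      OrthRows n (fun i d => if i = 0 then F₂ r d else F₂ r' d) F := by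
  obtain ⟨k, hk⟩ := hn
  have h2 : n / 2 + n / 2 = n := by omega
  set s₁ : Fin n → Fin 3 := fun d => sgn (F₁ r d) (F₁ r' d) with hs₁def
  set s₂ : Fin n → Fin 3 := fun d => sgn (F₂ r d) (F₂ r' d) with hs₂def
  -- counting hypotheses for feasibility
  have card_true : ∀ (P : Fin n → Prop) [DecidablePred P],
      (univ.filter fun d => P d ∧ True).card = (univ.filter fun d => P d).card := by
    intro P _; simp
  have hrowN : (univ.filter fun d => s₁ d = 1 ∧ s₂ d = 0 ∧ True).card
      + (univ.filter fun d => s₁ d = 1 ∧ s₂ d = 1 ∧ True).card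
      + (univ.filter fun d => s₁ d = 1 ∧ s₂ d = 2 ∧ True).card
      = (univ.filter fun d => s₁ d = 2 ∧ s₂ d = 0 ∧ True).card
      + (univ.filter fun d => s₁ d = 2 ∧ s₂ d = 1 ∧ True).card
      + (univ.filter fun d => s₁ d = 2 ∧ s₂ d = 2 ∧ True).card := by
    have r1 : (univ.filter fun d => F₁ r d = 0 ∧ True).card
        = (univ.filter fun d => s₁ d = 1 ∧ True).card
        + (univ.filter fun d => F₁ r d = 0 ∧ F₁ r' d = 0 ∧ True).card :=
      sgn_split_u' (fun d => F₁ r d) (fun d => F₁ r' d) (fun _ => True)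
    have r2 : (univ.filter fun d => F₁ r' d = 0 ∧ True).card
        = (univ.filter fun d => s₁ d = 2 ∧ True).card
        + (univ.filter fun d => F₁ r d = 0 ∧ F₁ r' d = 0 ∧ True).card :=
      sgn_split_v' (fun d => F₁ r d) (fun d => F₁ r' d) (fun _ => True)
    have r3 := split_row' s₁ s₂ (fun _ => True) 1
    have r4 := split_row' s₁ s₂ (fun _ => True) 2
    have r5 : (univ.filter fun d => F₁ r d = 0 ∧ True).card = n / 2 := by
      rw [card_true]; exact h₁.1 r 0
    have r6 : (univ.filter fun d => F₁ r' d = 0 ∧ True).card = n / 2 := by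
      rw [card_true]; exact h₁.1 r' 0
    omega
  have hcolN : (univ.filter fun d => s₁ d = 0 ∧ s₂ d = 1 ∧ True).card
      + (univ.filter fun d => s₁ d = 1 ∧ s₂ d = 1 ∧ True).card
      + (univ.filter fun d => s₁ d = 2 ∧ s₂ d = 1 ∧ True).card
      = (univ.filter fun d => s₁ d = 0 ∧ s₂ d = 2 ∧ True).card
      + (univ.filter fun d => s₁ d = 1 ∧ s₂ d = 2 ∧ True).card
      + (univ.filter fun d => s₁ d = 2 ∧ s₂ d = 2 ∧ True).card := by
    have r1 : (univ.filter fun d => F₂ r d = 0 ∧ True).card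
        = (univ.filter fun d => s₂ d = 1 ∧ True).card
        + (univ.filter fun d => F₂ r d = 0 ∧ F₂ r' d = 0 ∧ True).card :=
      sgn_split_u' (fun d => F₂ r d) (fun d => F₂ r' d) (fun _ => True)
    have r2 : (univ.filter fun d => F₂ r' d = 0 ∧ True).card
        = (univ.filter fun d => s₂ d = 2 ∧ True).card
        + (univ.filter fun d => F₂ r d = 0 ∧ F₂ r' d = 0 ∧ True).card :=
      sgn_split_v' (fun d => F₂ r d) (fun d => F₂ r' d) (fun _ => True)
    have r3 := split_col' s₁ s₂ (fun _ => True) 1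
    have r4 := split_col' s₁ s₂ (fun _ => True) 2
    have r5 : (univ.filter fun d => F₂ r d = 0 ∧ True).card = n / 2 := by
      rw [card_true]; exact h₂.1 r 0
    have r6 : (univ.filter fun d => F₂ r' d = 0 ∧ True).card = n / 2 := by
      rw [card_true]; exact h₂.1 r' 0
    omega
  have htotN : (univ.filter fun d => s₁ d = 1 ∧ s₂ d = 0 ∧ True).card
      + (univ.filter fun d => s₁ d = 2 ∧ s₂ d = 0 ∧ True).card
      + (univ.filter fun d => s₁ d = 0 ∧ s₂ d = 1 ∧ True).card
      + (univ.filter fun d => s₁ d = 0 ∧ s₂ d = 2 ∧ True).card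
      + (univ.filter fun d => s₁ d = 1 ∧ s₂ d = 1 ∧ True).card
      + (univ.filter fun d => s₁ d = 1 ∧ s₂ d = 2 ∧ True).card
      + (univ.filter fun d => s₁ d = 2 ∧ s₂ d = 1 ∧ True).card
      + (univ.filter fun d => s₁ d = 2 ∧ s₂ d = 2 ∧ True).card
      + (univ.filter fun d => s₁ d = 0 ∧ s₂ d = 0 ∧ True).card = n := by
    have r1 := split_nine' s₁ s₂ (fun _ : Fin n => True)
    have r2 : (univ.filter fun _ : Fin n => True).card = n := by simp
    omega
  have haN : 2 ≤ (univ.filter fun d => s₁ d = 0 ∧ s₂ d = 0 ∧ True).card := by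
    have hsub : ({c, c'} : Finset (Fin n)) ⊆
        univ.filter (fun d => s₁ d = 0 ∧ s₂ d = 0 ∧ True) := by
      intro z hz
      rcases Finset.mem_insert.1 hz with rfl | hz'
      · exact Finset.mem_filter.2 ⟨Finset.mem_univ _, sgn_zero _ _ e₁, sgn_zero _ _ e₂, trivial⟩
      · rcases Finset.mem_singleton.1 hz' with rfl
        exact Finset.mem_filter.2 ⟨Finset.mem_univ _, sgn_zero _ _ e₃, sgn_zero _ _ e₄, trivial⟩
    calc 2 = ({c, c'} : Finset (Fin n)).card := (Finset.card_pair hcc).symm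
    _ ≤ _ := Finset.card_le_card hsub
  obtain ⟨xbp, xbm, xcp, xcm, x11, x12, x21, x22, xa,
      hbp, hbm, hcp, hcm, h11, h12, h21, h22, hxa, hbrow, hbcol, hbtot⟩ :=
    feas _ _ _ _ _ _ _ _ _ n hrowN hcolN htotN ⟨k, hk⟩ haN
  -- choose subsets of each cell
  have hbp' : xbp ≤ (univ.filter fun d => s₁ d = 1 ∧ s₂ d = 0).card := by simpa using hbp
  have hbm' : xbm ≤ (univ.filter fun d => s₁ d = 2 ∧ s₂ d = 0).card := by simpa using hbm
  have hcp' : xcp ≤ (univ.filter fun d => s₁ d = 0 ∧ s₂ d = 1).card := by simpa using hcp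
  have hcm' : xcm ≤ (univ.filter fun d => s₁ d = 0 ∧ s₂ d = 2).card := by simpa using hcm
  have h11' : x11 ≤ (univ.filter fun d => s₁ d = 1 ∧ s₂ d = 1).card := by simpa using h11
  have h12' : x12 ≤ (univ.filter fun d => s₁ d = 1 ∧ s₂ d = 2).card := by simpa using h12
  have h21' : x21 ≤ (univ.filter fun d => s₁ d = 2 ∧ s₂ d = 1).card := by simpa using h21
  have h22' : x22 ≤ (univ.filter fun d => s₁ d = 2 ∧ s₂ d = 2).card := by simpa using h22
  have hxa' : xa ≤ (univ.filter fun d => s₁ d = 0 ∧ s₂ d = 0).card := by simpa using hxa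
  set Xv : Fin 3 × Fin 3 → ℕ := fun p =>
    if p.1 = 0 then (if p.2 = 0 then xa else if p.2 = 1 then xcp else xcm)
    else if p.1 = 1 then (if p.2 = 0 then xbp else if p.2 = 1 then x11 else x12)
    else (if p.2 = 0 then xbm else if p.2 = 1 then x21 else x22) with hXvdef
  have hex : ∀ p : Fin 3 × Fin 3,
      ∃ t, t ⊆ univ.filter (fun d => (s₁ d, s₂ d) = p) ∧ t.card = Xv p := by
    rintro ⟨i, j⟩
    have hfib : (univ.filter fun d => (s₁ d, s₂ d) = (i, j)).card
        = (univ.filter fun d => s₁ d = i ∧ s₂ d = j ∧ True).card := by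
      congr 1; ext d; simp [Prod.ext_iff]
    have hle : Xv (i, j) ≤ (univ.filter fun d => (s₁ d, s₂ d) = (i, j)).card := by
      rw [hfib]
      fin_cases i <;> fin_cases j <;> simp [Xv] <;> assumption
    obtain ⟨t, ht1, ht2⟩ := Finset.exists_subset_card_eq hle
    exact ⟨t, ht1, ht2⟩
  choose T hT1 hT2 using hex
  set S : Finset (Fin n) := univ.filter (fun d => d ∈ T (s₁ d, s₂ d)) with hSdef
  have memT : ∀ (p : Fin 3 × Fin 3) (d : Fin n), d ∈ T p ↔ ((s₁ d, s₂ d) = p ∧ d ∈ S) := by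
    intro p d
    constructor
    · intro h
      have hp := (Finset.mem_filter.1 (hT1 p h)).2
      refine ⟨hp, Finset.mem_filter.2 ⟨Finset.mem_univ _, ?_⟩⟩
      rw [hp]; exact h
    · rintro ⟨hp, hdS⟩
      have := (Finset.mem_filter.1 hdS).2
      rwa [hp] at this
  have cellS : ∀ i j : Fin 3,
      (univ.filter fun d => s₁ d = i ∧ s₂ d = j ∧ d ∈ S).card = Xv (i, j) := by
    intro i j
    rw [← hT2 (i, j)]
    congr 1
    ext d
    simp only [Finset.mem_filter, Finset.mem_univ, true_and, memT (i, j) d, Prod.mk.injEq]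
    tauto
  have c00 : (univ.filter fun d => s₁ d = 0 ∧ s₂ d = 0 ∧ d ∈ S).card = xa := by
    simpa [Xv] using cellS 0 0
  have c01 : (univ.filter fun d => s₁ d = 0 ∧ s₂ d = 1 ∧ d ∈ S).card = xcp := by
    simpa [Xv] using cellS 0 1
  have c02 : (univ.filter fun d => s₁ d = 0 ∧ s₂ d = 2 ∧ d ∈ S).card = xcm := by
    simpa [Xv] using cellS 0 2
  have c10 : (univ.filter fun d => s₁ d = 1 ∧ s₂ d = 0 ∧ d ∈ S).card = xbp := by
    simpa [Xv] using cellS 1 0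
  have c11 : (univ.filter fun d => s₁ d = 1 ∧ s₂ d = 1 ∧ d ∈ S).card = x11 := by
    simpa [Xv] using cellS 1 1
  have c12 : (univ.filter fun d => s₁ d = 1 ∧ s₂ d = 2 ∧ d ∈ S).card = x12 := by
    simpa [Xv] using cellS 1 2
  have c20 : (univ.filter fun d => s₁ d = 2 ∧ s₂ d = 0 ∧ d ∈ S).card = xbm := by
    simpa [Xv] using cellS 2 0
  have c21 : (univ.filter fun d => s₁ d = 2 ∧ s₂ d = 1 ∧ d ∈ S).card = x21 := by
    simpa [Xv] using cellS 2 1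
  have c22 : (univ.filter fun d => s₁ d = 2 ∧ s₂ d = 2 ∧ d ∈ S).card = x22 := by
    simpa [Xv] using cellS 2 2
  -- |S| = n/2
  have hSfil : (univ.filter fun d => d ∈ S).card = n / 2 := by
    have r1 := split_nine' s₁ s₂ (fun d => d ∈ S)
    rw [c00, c01, c02, c10, c11, c12, c20, c21, c22] at r1
    rw [r1]
    linarith only [hbtot]
  have hScard : S.card = n / 2 := by
    rw [← hSfil, Finset.filter_mem_eq_inter, Finset.univ_inter]
  -- balance facts
  have bal1 : (univ.filter fun d => F₁ r d = 0 ∧ d ∈ S).card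
      = (univ.filter fun d => F₁ r' d = 0 ∧ d ∈ S).card := by
    have b1 : (univ.filter fun d => F₁ r d = 0 ∧ d ∈ S).card
        = (univ.filter fun d => s₁ d = 1 ∧ d ∈ S).card
        + (univ.filter fun d => F₁ r d = 0 ∧ F₁ r' d = 0 ∧ d ∈ S).card :=
      sgn_split_u' (fun d => F₁ r d) (fun d => F₁ r' d) (fun d => d ∈ S)
    have b2 : (univ.filter fun d => F₁ r' d = 0 ∧ d ∈ S).card
        = (univ.filter fun d => s₁ d = 2 ∧ d ∈ S).card
        + (univ.filter fun d => F₁ r d = 0 ∧ F₁ r' d = 0 ∧ d ∈ S).card :=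
      sgn_split_v' (fun d => F₁ r d) (fun d => F₁ r' d) (fun d => d ∈ S)
    have b3 := split_row' s₁ s₂ (fun d => d ∈ S) 1
    have b4 := split_row' s₁ s₂ (fun d => d ∈ S) 2
    rw [c10, c11, c12] at b3
    rw [c20, c21, c22] at b4
    rw [b1, b2, b3, b4]
    linarith only [hbrow]
  have bal2 : (univ.filter fun d => F₂ r d = 0 ∧ d ∈ S).card
      = (univ.filter fun d => F₂ r' d = 0 ∧ d ∈ S).card := by
    have b1 : (univ.filter fun d => F₂ r d = 0 ∧ d ∈ S).card
        = (univ.filter fun d => s₂ d = 1 ∧ d ∈ S).card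
        + (univ.filter fun d => F₂ r d = 0 ∧ F₂ r' d = 0 ∧ d ∈ S).card :=
      sgn_split_u' (fun d => F₂ r d) (fun d => F₂ r' d) (fun d => d ∈ S)
    have b2 : (univ.filter fun d => F₂ r' d = 0 ∧ d ∈ S).card
        = (univ.filter fun d => s₂ d = 2 ∧ d ∈ S).card
        + (univ.filter fun d => F₂ r d = 0 ∧ F₂ r' d = 0 ∧ d ∈ S).card :=
      sgn_split_v' (fun d => F₂ r d) (fun d => F₂ r' d) (fun d => d ∈ S)
    have b3 := split_col' s₁ s₂ (fun d => d ∈ S) 1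
    have b4 := split_col' s₁ s₂ (fun d => d ∈ S) 2
    rw [c01, c11, c21] at b3
    rw [c02, c12, c22] at b4
    rw [b1, b2, b3, b4]
    linarith only [hbcol]
  -- the orthogonal array helpers
  have horth1 := orth_aux (fun d => F₁ r d) (fun d => F₁ r' d) S
    (h₁.1 r 0) (h₁.1 r 1) (h₁.1 r' 0) (h₁.1 r' 1) hScard bal1
  have horth2 := orth_aux (fun d => F₂ r d) (fun d => F₂ r' d) S
    (h₂.1 r 0) (h₂.1 r 1) (h₂.1 r' 0) (h₂.1 r' 1) hScard bal2
  -- ite membership lemmas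
  have hi1 : ∀ (P : Prop) [Decidable P], ((if P then (1 : Fin 2) else 0) = 1) ↔ P := by
    intro P _; by_cases h : P <;> simp [h]
  have hi0 : ∀ (P : Prop) [Decidable P], ((if P then (1 : Fin 2) else 0) = 0) ↔ ¬ P := by
    intro P _; by_cases h : P <;> simp [h]
  have hj1 : ∀ (P : Prop) [Decidable P], ((if P then (0 : Fin 2) else 1) = 1) ↔ ¬ P := by
    intro P _; by_cases h : P <;> simp [h]
  have hj0 : ∀ (P : Prop) [Decidable P], ((if P then (0 : Fin 2) else 1) = 0) ↔ P := by
    intro P _; by_cases h : P <;> simp [h]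
  refine ⟨fun i d => if i = 0 then (if d ∈ S then 1 else 0) else (if d ∈ S then 0 else 1),
    ?_, ?_, ?_, ?_⟩
  · -- row counts of F
    have hnotS : (univ.filter fun d => ¬ d ∈ S).card = n / 2 := by
      have hsp := Finset.card_filter_add_card_filter_not
        (s := (univ : Finset (Fin n))) (p := fun d => d ∈ S)
      simp only [Finset.card_univ, Fintype.card_fin] at hsp
      rw [hSfil] at hsp
      linarith only [hsp, h2]
    intro i s
    fin_cases i <;> fin_cases s <;>
      simp only [Fin.mk_zero, Fin.mk_one, Fin.isValue,
        show ((0 : Fin 2) = 0) = True from by simp,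
        show ((1 : Fin 2) = 0) = False from by decide, if_true, if_false,
        hi0, hi1, hj0, hj1]
    · exact hnotS
    · exact hSfil
    · exact hSfil
    · exact hnotS
  · -- columns differ
    intro d
    by_cases h : d ∈ S <;> simp [h]
  · -- orthogonality with square 1
    intro a b
    show (univ.filter fun x : Fin 2 × Fin n =>
        (if x.1 = 0 then F₁ r x.2 else F₁ r' x.2) = a ∧
        (if x.1 = 0 then (if x.2 ∈ S then (1 : Fin 2) else 0)
          else (if x.2 ∈ S then 0 else 1)) = b).card = n / 2
    rw [prod_split' (fun d => F₁ r d) (fun d => F₁ r' d)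
      (fun i d => if i = 0 then (if d ∈ S then (1 : Fin 2) else 0)
        else (if d ∈ S then 0 else 1)) a b]
    simp only [show ((0 : Fin 2) = 0) = True from by simp,
      show ((1 : Fin 2) = 0) = False from by decide, if_true, if_false]
    fin_cases b
    · simp only [Fin.mk_zero, Fin.isValue, hi0, hj0]
      exact (horth1 a).2
    · simp only [Fin.mk_one, Fin.isValue, hi1, hj1]
      exact (horth1 a).1
  · -- orthogonality with square 2
    intro a b
    show (univ.filter fun x : Fin 2 × Fin n =>
        (if x.1 = 0 then F₂ r x.2 else F₂ r' x.2) = a ∧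
        (if x.1 = 0 then (if x.2 ∈ S then (1 : Fin 2) else 0)
          else (if x.2 ∈ S then 0 else 1)) = b).card = n / 2
    rw [prod_split' (fun d => F₂ r d) (fun d => F₂ r' d)
      (fun i d => if i = 0 then (if d ∈ S then (1 : Fin 2) else 0)
        else (if d ∈ S then 0 else 1)) a b]
    simp only [show ((0 : Fin 2) = 0) = True from by simp,
      show ((1 : Fin 2) = 0) = False from by decide, if_true, if_false]
    fin_cases b
    · simp only [Fin.mk_zero, Fin.isValue, hi0, hj0]
      exact (horth2 a).2
    · simp only [Fin.mk_one, Fin.isValue, hi1, hj1]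
      exact (horth2 a).1
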